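/- arXiv:2109.01974 — 2 statements merged into one kernel-verified Lean document; each statement's English description precedes it below -/
import Mathlib

section
/- Suppose there exists q ∈ (0,1) such that τ₀ ≤ q/κ and M r₀/μ ≤ (q(1−q)/7)·(q/κ − τ₀). Then for all k ≥ 0, τ_k² ≤ τ₀² + ((1+q)/(1−q))·(2M r₀/(μκ) + 2M²r₀²/μ²) ≤ (q/κ)², and r_{k+1} ≤ q r_k. -/
open Matrix MeasureTheory
set_option maxHeartbeats 2000000

noncomputable def specNorm {n : ℕ} (A : Matrix (Fin n) (Fin n) ℝ) : ℝ :=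
  ‖Matrix.toEuclideanCLM (𝕜 := ℝ) A‖

noncomputable def frobNorm {n : ℕ} (A : Matrix (Fin n) (Fin n) ℝ) : ℝ :=
  Real.sqrt (∑ i, ∑ j, (A i j) ^ 2)

noncomputable def vnorm {n : ℕ} (x : Fin n → ℝ) : ℝ :=
  Real.sqrt (∑ i, (x i) ^ 2)

noncomputable def intJac {n : ℕ} (J : (Fin n → ℝ) → Matrix (Fin n) (Fin n) ℝ)
    (x u : Fin n → ℝ) : Matrix (Fin n) (Fin n) ℝ :=
  Matrix.of fun i j => ∫ t in (0:ℝ)..(1:ℝ), J (x + t • u) i j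

variable {n : ℕ}

lemma vnorm_eq (x : Fin n → ℝ) : vnorm x = ‖(WithLp.equiv 2 (Fin n → ℝ)).symm x‖ := by
  rw [vnorm, EuclideanSpace.norm_eq]
  congr 1
  refine Finset.sum_congr rfl fun i _ => ?_
  simp [WithLp.equiv_symm_apply, sq_abs]

lemma vnorm_nonneg (x : Fin n → ℝ) : 0 ≤ vnorm x := Real.sqrt_nonneg _

lemma vnorm_add_le (x y : Fin n → ℝ) : vnorm (x + y) ≤ vnorm x + vnorm y := by
  simp only [vnorm_eq, map_add]; exact norm_add_le _ _

lemma vnorm_neg (x : Fin n → ℝ) : vnorm (-x) = vnorm x := by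
  simp only [vnorm_eq, map_neg]; exact norm_neg _

lemma vnorm_smul (c : ℝ) (x : Fin n → ℝ) : vnorm (c • x) = |c| * vnorm x := by
  rw [vnorm_eq, vnorm_eq, WithLp.equiv_symm_apply, WithLp.toLp_smul, norm_smul, Real.norm_eq_abs]

lemma vnorm_pos {x : Fin n → ℝ} (hx : x ≠ 0) : 0 < vnorm x := by
  rw [vnorm_eq]
  have : (WithLp.equiv 2 (Fin n → ℝ)).symm x ≠ 0 := by
    simpa using hx
  exact norm_pos_iff.2 this

lemma vnorm_mulVec_le_spec (A : Matrix (Fin n) (Fin n) ℝ) (v : Fin n → ℝ) :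
    vnorm (A *ᵥ v) ≤ specNorm A * vnorm v := by
  have h := (Matrix.toEuclideanCLM (𝕜 := ℝ) A).le_opNorm ((WithLp.equiv 2 (Fin n → ℝ)).symm v)
  rw [vnorm_eq, vnorm_eq]; exact h

lemma frobNorm_nonneg (A : Matrix (Fin n) (Fin n) ℝ) : 0 ≤ frobNorm A := Real.sqrt_nonneg _

lemma frob_sq (A : Matrix (Fin n) (Fin n) ℝ) : frobNorm A ^ 2 = ∑ i, ∑ j, (A i j) ^ 2 := by
  rw [frobNorm, Real.sq_sqrt]
  positivity

lemma vnorm_sq (x : Fin n → ℝ) : vnorm x ^ 2 = ∑ i, (x i) ^ 2 := by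
  rw [vnorm, Real.sq_sqrt]; positivity

lemma vnorm_mulVec_le_frob (A : Matrix (Fin n) (Fin n) ℝ) (v : Fin n → ℝ) :
    vnorm (A *ᵥ v) ≤ frobNorm A * vnorm v := by
  have h2 : vnorm (A *ᵥ v) ^ 2 ≤ (frobNorm A * vnorm v) ^ 2 := by
    rw [vnorm_sq, mul_pow, frob_sq, vnorm_sq, Finset.sum_mul]
    refine Finset.sum_le_sum fun i _ => ?_
    simpa [Matrix.mulVec, dotProduct] using
      Finset.sum_mul_sq_le_sq_mul_sq Finset.univ (fun j => A i j) v
  nlinarith [h2, vnorm_nonneg (A *ᵥ v), mul_nonneg (frobNorm_nonneg A) (vnorm_nonneg v)]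
variable {n : ℕ}

lemma frobNorm_eq (A : Matrix (Fin n) (Fin n) ℝ) :
    frobNorm A = ‖(WithLp.equiv 2 (Fin n × Fin n → ℝ)).symm (fun p => A p.1 p.2)‖ := by
  rw [frobNorm, EuclideanSpace.norm_eq]
  simp only [Fintype.sum_prod_type, WithLp.equiv_symm_apply, WithLp.ofLp_toLp, Real.norm_eq_abs, sq_abs]

lemma frobNorm_add_le (A B : Matrix (Fin n) (Fin n) ℝ) :
    frobNorm (A + B) ≤ frobNorm A + frobNorm B := by
  simp only [frobNorm_eq]
  have : (WithLp.equiv 2 (Fin n × Fin n → ℝ)).symm (fun p => (A + B) p.1 p.2)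
      = (WithLp.equiv 2 (Fin n × Fin n → ℝ)).symm (fun p => A p.1 p.2)
        + (WithLp.equiv 2 (Fin n × Fin n → ℝ)).symm (fun p => B p.1 p.2) := rfl
  rw [this]
  exact norm_add_le _ _

lemma frobNorm_smul_vecMulVec (c : ℝ) (w y : Fin n → ℝ) :
    frobNorm (c • vecMulVec w y) = |c| * (vnorm w * vnorm y) := by
  rw [frobNorm]
  have h : ∀ i j : Fin n, ((c • vecMulVec w y) i j) ^ 2 = c^2 * (w i^2 * y j^2) := by
    intro i j; simp only [Matrix.smul_apply, vecMulVec_apply, smul_eq_mul]; ring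
  calc Real.sqrt (∑ i, ∑ j, ((c • vecMulVec w y) i j) ^ 2)
      = Real.sqrt (c^2 * ((∑ i, w i^2) * (∑ j, y j^2))) := by
        congr 1
        simp_rw [h]
        rw [Finset.sum_mul_sum, Finset.mul_sum]
        exact Finset.sum_congr rfl fun i _ => by rw [Finset.mul_sum]
    _ = |c| * (vnorm w * vnorm y) := by
        rw [Real.sqrt_mul (sq_nonneg c), Real.sqrt_sq_eq_abs,
          Real.sqrt_mul (by positivity), vnorm, vnorm]

lemma frob_proj (X : Matrix (Fin n) (Fin n) ℝ) (y : Fin n → ℝ) (hy : y ≠ 0) :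
    frobNorm (X - (y ⬝ᵥ y)⁻¹ • vecMulVec (X *ᵥ y) y) ≤ frobNorm X := by
  have ht : (0:ℝ) < ∑ j, y j ^ 2 := by
    obtain ⟨i, hi⟩ := Function.ne_iff.1 hy
    exact Finset.sum_pos' (fun _ _ => sq_nonneg _)
      ⟨i, Finset.mem_univ _, lt_of_le_of_ne (sq_nonneg _) (Ne.symm (pow_ne_zero 2 hi))⟩
  set t : ℝ := ∑ j, y j ^ 2 with htdef
  have hdot : y ⬝ᵥ y = t := by simp [dotProduct, htdef, sq]
  apply Real.sqrt_le_sqrt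
  refine Finset.sum_le_sum fun i _ => ?_
  set r : Fin n → ℝ := X i with hr
  set s : ℝ := ∑ l, r l * y l with hs
  have hentry : ∀ j, (X - (y ⬝ᵥ y)⁻¹ • vecMulVec (X *ᵥ y) y) i j
      = r j - t⁻¹ * (s * y j) := by
    intro j
    have h1 : (X - (y ⬝ᵥ y)⁻¹ • vecMulVec (X *ᵥ y) y) i j
        = X i j - t⁻¹ * ((X *ᵥ y) i * y j) := by
      rw [Matrix.sub_apply, Matrix.smul_apply, vecMulVec_apply, hdot, smul_eq_mul]
    have h2 : (X *ᵥ y) i = s := by simp only [Matrix.mulVec, dotProduct, hs, hr]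
    rw [h1, h2, hr]
  calc ∑ j, ((X - (y ⬝ᵥ y)⁻¹ • vecMulVec (X *ᵥ y) y) i j) ^ 2
      = ∑ j, (r j ^ 2 - 2*t⁻¹*s*(r j * y j) + (t⁻¹*s)^2 * y j ^2) := by
        refine Finset.sum_congr rfl fun j _ => ?_; rw [hentry j]; ring
    _ = (∑ j, r j ^ 2) - 2*t⁻¹*s*s + (t⁻¹*s)^2*t := by
        rw [Finset.sum_add_distrib, Finset.sum_sub_distrib, ← Finset.mul_sum, ← Finset.mul_sum,
          ← hs]
    _ ≤ ∑ j, r j ^ 2 := by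
        have h1 : (t⁻¹*s)^2*t = s^2/t := by field_simp
        have h2 : 2*t⁻¹*s*s = 2*(s^2/t) := by field_simp
        have h3 : 0 ≤ s^2/t := div_nonneg (sq_nonneg _) ht.le
        rw [h1, h2]; linarith

noncomputable def toE : (Fin n → ℝ) →L[ℝ] EuclideanSpace ℝ (Fin n) :=
  LinearMap.toContinuousLinearMap ((WithLp.linearEquiv 2 ℝ (Fin n → ℝ)).symm.toLinearMap)

lemma norm_toE (v : Fin n → ℝ) : ‖toE v‖ = vnorm v := (vnorm_eq v).symm

lemma line_hasDerivAt (a u : Fin n → ℝ) (t : ℝ) :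
    HasDerivAt (fun s : ℝ => a + s • u) u t := by
  have h : HasDerivAt (fun s : ℝ => s • u) ((1:ℝ) • u) t := (hasDerivAt_id t).smul_const u
  simpa using h.const_add a

lemma pathDeriv {F : (Fin n → ℝ) → (Fin n → ℝ)} {J : (Fin n → ℝ) → Matrix (Fin n) (Fin n) ℝ}
    (hF : ∀ z, HasFDerivAt F (LinearMap.toContinuousLinearMap ((J z).mulVecLin)) z)
    (a u : Fin n → ℝ) (t : ℝ) :
    HasDerivAt (fun s : ℝ => F (a + s • u)) (J (a + t • u) *ᵥ u) t := by
  have h := (hF (a + t • u)).comp_hasDerivAt t (line_hasDerivAt a u t)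
  simpa [Function.comp_def] using h

lemma contInt {J : (Fin n → ℝ) → Matrix (Fin n) (Fin n) ℝ} (hJc : Continuous J)
    (a u : Fin n → ℝ) : Continuous (fun t : ℝ => J (a + t • u) *ᵥ u) := by
  have h1 : Continuous fun t : ℝ => J (a + t • u) :=
    hJc.comp (by continuity)
  exact h1.matrix_mulVec continuous_const

lemma ftc {F : (Fin n → ℝ) → (Fin n → ℝ)} {J : (Fin n → ℝ) → Matrix (Fin n) (Fin n) ℝ}
    (hF : ∀ z, HasFDerivAt F (LinearMap.toContinuousLinearMap ((J z).mulVecLin)) z)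
    (hJc : Continuous J) (a b : Fin n → ℝ) :
    F b - F a = ∫ t in (0:ℝ)..1, (J (a + t • (b - a)) *ᵥ (b - a)) := by
  have h := intervalIntegral.integral_eq_sub_of_hasDerivAt
    (f := fun s : ℝ => F (a + s • (b - a)))
    (f' := fun s : ℝ => J (a + s • (b - a)) *ᵥ (b - a))
    (fun t _ => pathDeriv hF a (b - a) t)
    ((contInt hJc a (b - a)).intervalIntegrable 0 1)
  rw [h]
  norm_num

lemma key2 {F : (Fin n → ℝ) → (Fin n → ℝ)} {J : (Fin n → ℝ) → Matrix (Fin n) (Fin n) ℝ}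
    (hF : ∀ z, HasFDerivAt F (LinearMap.toContinuousLinearMap ((J z).mulVecLin)) z)
    (hJc : Continuous J) (xs : Fin n → ℝ) (M : ℝ) (hM : 0 ≤ M)
    (hLip : ∀ z, specNorm (J z - J xs) ≤ M * vnorm (z - xs))
    (R : ℝ) (a b : Fin n → ℝ) (ha : vnorm (a - xs) ≤ R) (hb : vnorm (b - xs) ≤ R) :
    vnorm (F b - F a - (J xs) *ᵥ (b - a)) ≤ M * R * vnorm (b - a) := by
  set u := b - a with hu
  have hint : IntervalIntegrable (fun t : ℝ => J (a + t • u) *ᵥ u) volume 0 1 :=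
    (contInt hJc a u).intervalIntegrable 0 1
  have hintc : IntervalIntegrable (fun _ : ℝ => (J xs) *ᵥ u) volume 0 1 :=
    intervalIntegrable_const
  have hintd : IntervalIntegrable (fun t : ℝ => (J (a + t • u) - J xs) *ᵥ u) volume 0 1 := by
    have : (fun t : ℝ => (J (a + t • u) - J xs) *ᵥ u)
        = fun t : ℝ => (J (a + t • u) *ᵥ u) - (J xs *ᵥ u) := by
      funext t; rw [Matrix.sub_mulVec]
    rw [this]; exact hint.sub hintc
  have hsub : F b - F a - (J xs) *ᵥ u
      = ∫ t in (0:ℝ)..1, ((J (a + t • u) - J xs) *ᵥ u) := by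
    rw [ftc hF hJc a b, ← hu]
    have hconst : (J xs) *ᵥ u = ∫ _ in (0:ℝ)..1, (J xs) *ᵥ u := by simp
    rw [hconst, ← intervalIntegral.integral_sub hint hintc]
    congr 1; funext t; rw [Matrix.sub_mulVec]
  rw [hsub]
  have hcomm : toE (∫ t in (0:ℝ)..1, ((J (a + t • u) - J xs) *ᵥ u))
      = ∫ t in (0:ℝ)..1, toE ((J (a + t • u) - J xs) *ᵥ u) :=
    (ContinuousLinearMap.intervalIntegral_comp_comm toE hintd).symm
  have hR : 0 ≤ R := le_trans (vnorm_nonneg _) ha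
  have hbound : ∀ t ∈ Set.uIoc (0:ℝ) 1, ‖toE ((J (a + t • u) - J xs) *ᵥ u)‖ ≤ M * R * vnorm u := by
    intro t ht
    rw [Set.uIoc_of_le (by norm_num : (0:ℝ) ≤ 1)] at ht
    obtain ⟨ht0, ht1⟩ := ht
    rw [norm_toE]
    have hpath : a + t • u - xs = (1 - t) • (a - xs) + t • (b - xs) := by
      rw [hu]; module
    have hd : vnorm (a + t • u - xs) ≤ R := by
      rw [hpath]
      calc vnorm ((1 - t) • (a - xs) + t • (b - xs))
          ≤ |1 - t| * vnorm (a - xs) + |t| * vnorm (b - xs) := by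
            refine le_trans (vnorm_add_le _ _) ?_
            rw [vnorm_smul, vnorm_smul]
        _ ≤ R := by
            rw [abs_of_nonneg (by linarith : (0:ℝ) ≤ 1 - t), abs_of_nonneg ht0.le]
            nlinarith [vnorm_nonneg (a - xs), vnorm_nonneg (b - xs)]
    calc vnorm ((J (a + t • u) - J xs) *ᵥ u)
        ≤ specNorm (J (a + t • u) - J xs) * vnorm u := vnorm_mulVec_le_spec _ _
      _ ≤ (M * vnorm (a + t • u - xs)) * vnorm u := by
          exact mul_le_mul_of_nonneg_right (hLip _) (vnorm_nonneg _)
      _ ≤ M * R * vnorm u := by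
          exact mul_le_mul_of_nonneg_right (by nlinarith) (vnorm_nonneg _)
  calc vnorm (∫ t in (0:ℝ)..1, ((J (a + t • u) - J xs) *ᵥ u))
      = ‖∫ t in (0:ℝ)..1, toE ((J (a + t • u) - J xs) *ᵥ u)‖ := by
        rw [← hcomm, norm_toE]
    _ ≤ M * R * vnorm u * |1 - 0| := intervalIntegral.norm_integral_le_of_norm_le_const hbound
    _ = M * R * vnorm u := by norm_num
section Chunk4
open Matrix MeasureTheory
variable {n : ℕ}

lemma vnorm_zero : vnorm (0 : Fin n → ℝ) = 0 := by simp [vnorm]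

lemma vnorm_sub_le (x y : Fin n → ℝ) : vnorm (x - y) ≤ vnorm x + vnorm y := by
  rw [sub_eq_add_neg]
  exact le_trans (vnorm_add_le _ _) (by rw [vnorm_neg])

lemma mul_vecMulVec (A : Matrix (Fin n) (Fin n) ℝ) (w y : Fin n → ℝ) :
    A * vecMulVec w y = vecMulVec (A *ᵥ w) y := by
  ext i j
  simp only [Matrix.mul_apply, vecMulVec_apply, Matrix.mulVec, dotProduct, Finset.sum_mul]
  exact Finset.sum_congr rfl fun l _ => by ring

lemma vecMulVec_sub (p r y : Fin n → ℝ) :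
    vecMulVec (p - r) y = vecMulVec p y - vecMulVec r y := by
  ext i j; simp [vecMulVec_apply]; ring

/-- Core bound for the convergence step. -/
lemma rstep_core {F : (Fin n → ℝ) → (Fin n → ℝ)} {J : (Fin n → ℝ) → Matrix (Fin n) (Fin n) ℝ}
    (hF : ∀ z, HasFDerivAt F (LinearMap.toContinuousLinearMap ((J z).mulVecLin)) z)
    (hJc : Continuous J) {xs : Fin n → ℝ} (hxs : F xs = 0) (hJs : IsUnit (J xs).det)
    {μ L : ℝ} (hμA : specNorm ((J xs)⁻¹) = 1/μ) (hμ0 : 0 < μ) (hL : L = specNorm (J xs))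
    {M : ℝ} (hM : 0 ≤ M)
    (hLip : ∀ z, specNorm (J z - J xs) ≤ M * vnorm (z - xs))
    (Hk : Matrix (Fin n) (Fin n) ℝ) (xk : Fin n → ℝ) :
    vnorm (xk - Hk *ᵥ F xk - xs) ≤
      (1/μ) * (frobNorm (J xs * (Hk - (J xs)⁻¹)) * (L * vnorm (xk - xs)))
      + (1/μ) * ((1 + frobNorm (J xs * (Hk - (J xs)⁻¹)))
          * (M * vnorm (xk - xs) * vnorm (xk - xs))) := by
  set A := J xs with hA
  set Ai := (J xs)⁻¹ with hAidef
  set Ek := A * (Hk - Ai) with hEk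
  set d := xk - xs with hd
  set ρ := F xk - A *ᵥ d with hρ
  have hAiA : Ai * A = 1 := nonsing_inv_mul _ hJs
  have hAAi : A * Ai = 1 := mul_nonsing_inv _ hJs
  -- bound on ρ
  have hρbound : vnorm ρ ≤ M * vnorm (xk - xs) * vnorm (xk - xs) := by
    have h := key2 hF hJc xs M hM hLip (vnorm (xk - xs)) xs xk
      (by rw [sub_self, vnorm_zero]; exact vnorm_nonneg _) le_rfl
    rw [hxs, sub_zero] at h
    exact h
  -- decomposition of F xk
  have hFdec : F xk = A *ᵥ d + ρ := by rw [hρ]; abel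
  -- matrix identities
  have hAiEk : Ai * Ek = Hk - Ai := by
    rw [hEk, ← Matrix.mul_assoc, hAiA, Matrix.one_mul]
  have e1 : Ai *ᵥ (Ek *ᵥ (A *ᵥ d)) = Hk *ᵥ (A *ᵥ d) - d := by
    rw [Matrix.mulVec_mulVec, Matrix.mulVec_mulVec, hAiEk, Matrix.sub_mul, hAiA,
      Matrix.sub_mulVec, ← Matrix.mulVec_mulVec, Matrix.one_mulVec]
  have e3 : Hk *ᵥ ρ = Ai *ᵥ ρ + Ai *ᵥ (Ek *ᵥ ρ) := by
    rw [Matrix.mulVec_mulVec, hAiEk, Matrix.sub_mulVec]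
    abel
  have e2 : xk - Hk *ᵥ F xk - xs = -(Ai *ᵥ (Ek *ᵥ (A *ᵥ d))) - (Ai *ᵥ ρ + Ai *ᵥ (Ek *ᵥ ρ)) := by
    rw [← e3, hFdec, Matrix.mulVec_add, e1]
    rw [hd]; abel
  rw [e2]
  -- norms
  have b1 : vnorm (Ai *ᵥ (Ek *ᵥ (A *ᵥ d))) ≤ (1/μ) * (frobNorm Ek * (L * vnorm d)) := by
    calc vnorm (Ai *ᵥ (Ek *ᵥ (A *ᵥ d))) ≤ specNorm Ai * vnorm (Ek *ᵥ (A *ᵥ d)) :=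
          vnorm_mulVec_le_spec _ _
      _ ≤ (1/μ) * (frobNorm Ek * vnorm (A *ᵥ d)) := by
          rw [hμA]
          refine mul_le_mul_of_nonneg_left ?_ (by positivity)
          exact vnorm_mulVec_le_frob _ _
      _ ≤ (1/μ) * (frobNorm Ek * (L * vnorm d)) := by
          refine mul_le_mul_of_nonneg_left ?_ (by positivity)
          refine mul_le_mul_of_nonneg_left ?_ (frobNorm_nonneg _)
          rw [hL]; exact vnorm_mulVec_le_spec _ _
  have b2 : vnorm (Ai *ᵥ ρ + Ai *ᵥ (Ek *ᵥ ρ)) ≤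
      (1/μ) * ((1 + frobNorm Ek) * (M * vnorm (xk - xs) * vnorm (xk - xs))) := by
    have h1 : vnorm (Ai *ᵥ ρ) ≤ (1/μ) * vnorm ρ := by
      have := vnorm_mulVec_le_spec Ai ρ; rwa [hμA] at this
    have h2 : vnorm (Ai *ᵥ (Ek *ᵥ ρ)) ≤ (1/μ) * (frobNorm Ek * vnorm ρ) := by
      calc vnorm (Ai *ᵥ (Ek *ᵥ ρ)) ≤ specNorm Ai * vnorm (Ek *ᵥ ρ) := vnorm_mulVec_le_spec _ _
        _ ≤ (1/μ) * (frobNorm Ek * vnorm ρ) := by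
            rw [hμA]
            exact mul_le_mul_of_nonneg_left (vnorm_mulVec_le_frob _ _) (by positivity)
    have h3 := vnorm_add_le (Ai *ᵥ ρ) (Ai *ᵥ (Ek *ᵥ ρ))
    have h4 : 0 ≤ frobNorm Ek := frobNorm_nonneg _
    have h5 : 0 ≤ vnorm ρ := vnorm_nonneg _
    nlinarith [hρbound, hμ0, mul_le_mul_of_nonneg_left hρbound (le_of_lt (by positivity : (0:ℝ) < 1/μ)), mul_le_mul_of_nonneg_left hρbound (mul_nonneg (le_of_lt (by positivity : (0:ℝ) < 1/μ)) h4)]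
  calc vnorm (-(Ai *ᵥ (Ek *ᵥ (A *ᵥ d))) - (Ai *ᵥ ρ + Ai *ᵥ (Ek *ᵥ ρ)))
      ≤ vnorm (-(Ai *ᵥ (Ek *ᵥ (A *ᵥ d)))) + vnorm (Ai *ᵥ ρ + Ai *ᵥ (Ek *ᵥ ρ)) :=
        vnorm_sub_le _ _
    _ ≤ (1/μ) * (frobNorm Ek * (L * vnorm d))
        + (1/μ) * ((1 + frobNorm Ek) * (M * vnorm (xk - xs) * vnorm (xk - xs))) := by
        rw [vnorm_neg]
        exact add_le_add b1 b2
end Chunk4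
section Chunk5
open Matrix MeasureTheory
variable {n : ℕ}

/-- Core bound for the Frobenius-measure update step. -/
lemma tstep_core {F : (Fin n → ℝ) → (Fin n → ℝ)} {J : (Fin n → ℝ) → Matrix (Fin n) (Fin n) ℝ}
    (hF : ∀ z, HasFDerivAt F (LinearMap.toContinuousLinearMap ((J z).mulVecLin)) z)
    (hJc : Continuous J) {xs : Fin n → ℝ} (hJs : IsUnit (J xs).det)
    {μ : ℝ} (hμA : specNorm ((J xs)⁻¹) = 1/μ) (hμ0 : 0 < μ)
    {M : ℝ} (hM : 0 ≤ M)
    (hLip : ∀ z, specNorm (J z - J xs) ≤ M * vnorm (z - xs))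
    (Hk Hk1 : Matrix (Fin n) (Fin n) ℝ) (xk xk1 : Fin n → ℝ)
    (hupd : Hk1 = Hk + ((F xk1 - F xk) ⬝ᵥ (F xk1 - F xk))⁻¹ •
        vecMulVec (xk1 - xk - Hk *ᵥ (F xk1 - F xk)) (F xk1 - F xk))
    (hy0 : F xk1 - F xk ≠ 0) (hu0 : xk1 - xk ≠ 0)
    (hclose : vnorm (xk1 - xs) ≤ vnorm (xk - xs))
    (hsmall : M * vnorm (xk - xs) ≤ μ/7) :
    frobNorm (J xs * (Hk1 - (J xs)⁻¹)) ≤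
      frobNorm (J xs * (Hk - (J xs)⁻¹)) + 7/6 * (M * vnorm (xk - xs) / μ) := by
  set A := J xs with hA
  set Ai := (J xs)⁻¹ with hAidef
  set u := xk1 - xk with hu
  set y := F xk1 - F xk with hy
  set Ek := A * (Hk - Ai) with hEk
  set R := vnorm (xk - xs) with hR
  have hAiA : Ai * A = 1 := nonsing_inv_mul _ hJs
  have hAAi : A * Ai = 1 := mul_nonsing_inv _ hJs
  set ρ := y - A *ᵥ u with hρ
  have hρb : vnorm ρ ≤ M * R * vnorm u := by
    have h := key2 hF hJc xs M hM hLip R xk xk1 le_rfl hclose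
    exact h
  -- matrix recursion
  have hAHk : A * Hk = Ek + 1 := by
    rw [hEk, Matrix.mul_sub, hAAi]; abel
  have hAw : A *ᵥ (u - Hk *ᵥ y) = (A *ᵥ u - y) - Ek *ᵥ y := by
    rw [Matrix.mulVec_sub, Matrix.mulVec_mulVec, hAHk, Matrix.add_mulVec, Matrix.one_mulVec]
    abel
  have hErec : A * (Hk1 - Ai)
      = (Ek - (y ⬝ᵥ y)⁻¹ • vecMulVec (Ek *ᵥ y) y)
        + (y ⬝ᵥ y)⁻¹ • vecMulVec (A *ᵥ u - y) y := by
    rw [hupd]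
    have : Hk + (y ⬝ᵥ y)⁻¹ • vecMulVec (u - Hk *ᵥ y) y - Ai
        = (Hk - Ai) + (y ⬝ᵥ y)⁻¹ • vecMulVec (u - Hk *ᵥ y) y := by abel
    rw [this, Matrix.mul_add, Matrix.mul_smul, mul_vecMulVec, hAw, vecMulVec_sub, smul_sub]
    abel
  -- norms
  have hyy : y ⬝ᵥ y = vnorm y ^ 2 := by
    rw [vnorm_sq]; simp [dotProduct, sq]
  have hvy : 0 < vnorm y := vnorm_pos hy0
  have hvu : 0 < vnorm u := vnorm_pos hu0
  have hMR : 0 ≤ M * R := mul_nonneg hM (vnorm_nonneg _)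
  -- lower bound for ‖y‖
  have hAu_ge : μ * vnorm u ≤ vnorm (A *ᵥ u) := by
    have h1 : u = Ai *ᵥ (A *ᵥ u) := by
      rw [Matrix.mulVec_mulVec, hAiA, Matrix.one_mulVec]
    have h2 : vnorm u ≤ (1/μ) * vnorm (A *ᵥ u) := by
      calc vnorm u = vnorm (Ai *ᵥ (A *ᵥ u)) := by rw [← h1]
        _ ≤ specNorm Ai * vnorm (A *ᵥ u) := vnorm_mulVec_le_spec _ _
        _ = (1/μ) * vnorm (A *ᵥ u) := by rw [hμA]
    calc μ * vnorm u ≤ μ * (1/μ * vnorm (A *ᵥ u)) := mul_le_mul_of_nonneg_left h2 hμ0.le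
      _ = vnorm (A *ᵥ u) := by field_simp
  have hAu_le : vnorm (A *ᵥ u) ≤ vnorm y + vnorm ρ := by
    have : A *ᵥ u = y - ρ := by rw [hρ]; abel
    rw [this]; exact vnorm_sub_le _ _
  have hy_ge : 6/7 * (μ * vnorm u) ≤ vnorm y := by
    have hρb2 : vnorm ρ ≤ μ/7 * vnorm u :=
      le_trans hρb (mul_le_mul_of_nonneg_right hsmall (vnorm_nonneg _))
    nlinarith
  -- the two frobenius pieces
  have hfrob := frobNorm_add_le (Ek - (y ⬝ᵥ y)⁻¹ • vecMulVec (Ek *ᵥ y) y)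
    ((y ⬝ᵥ y)⁻¹ • vecMulVec (A *ᵥ u - y) y)
  rw [← hErec] at hfrob
  have hp1 : frobNorm (Ek - (y ⬝ᵥ y)⁻¹ • vecMulVec (Ek *ᵥ y) y) ≤ frobNorm Ek :=
    frob_proj Ek y hy0
  have hp2 : frobNorm ((y ⬝ᵥ y)⁻¹ • vecMulVec (A *ᵥ u - y) y)
      ≤ 7/6 * (M * R / μ) := by
    rw [frobNorm_smul_vecMulVec]
    have hAuy : vnorm (A *ᵥ u - y) = vnorm ρ := by
      have : A *ᵥ u - y = -ρ := by rw [hρ]; abel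
      rw [this, vnorm_neg]
    rw [hAuy, hyy]
    have habs : |((vnorm y ^ 2)⁻¹ : ℝ)| = (vnorm y ^ 2)⁻¹ := abs_of_nonneg (by positivity)
    rw [habs]
    have hgoal : (vnorm y ^ 2)⁻¹ * (vnorm ρ * vnorm y) = vnorm ρ / vnorm y := by
      field_simp
    rw [hgoal, div_le_iff₀ hvy]
    have hfin : 7/6 * (M * R / μ) * vnorm y ≥ 7/6 * (M * R / μ) * (6/7 * (μ * vnorm u)) := by
      refine mul_le_mul_of_nonneg_left hy_ge (by positivity)
    have heq : 7/6 * (M * R / μ) * (6/7 * (μ * vnorm u)) = M * R * vnorm u := by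
      field_simp
    nlinarith
  calc frobNorm (A * (Hk1 - Ai)) ≤ _ := hfrob
    _ ≤ frobNorm Ek + 7/6 * (M * R / μ) := add_le_add hp1 hp2
end Chunk5
section Chunk6
open Matrix MeasureTheory
variable {n : ℕ}

lemma geom_aux {q : ℝ} (hq0 : 0 ≤ q) (hq1 : q < 1) (k : ℕ) :
    (∑ j ∈ Finset.range k, q^j) * (1-q) ≤ 1 ∧ 0 ≤ ∑ j ∈ Finset.range k, q^j := by
  constructor
  · have h := geom_sum_mul q k
    have h2 : (∑ j ∈ Finset.range k, q^j) * (1-q) = 1 - q^k := by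
      have : (∑ j ∈ Finset.range k, q^j) * (1-q)
          = -((∑ j ∈ Finset.range k, q^j) * (q-1)) := by ring
      rw [this, h]; ring
    rw [h2]
    have : 0 ≤ q^k := by positivity
    linarith
  · exact Finset.sum_nonneg fun j _ => by positivity

lemma specNorm_pos {A : Matrix (Fin n) (Fin n) ℝ} (hA : A ≠ 0) : 0 < specNorm A := by
  have hex : ∃ i j, A i j ≠ 0 := by
    by_contra h
    push_neg at h
    exact hA (by ext i j; simpa using h i j)
  obtain ⟨i, j, hij⟩ := hex
  set v : Fin n → ℝ := Pi.single j 1 with hv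
  have hv0 : v ≠ 0 := by
    intro h
    have := congrFun h j
    rw [hv, Pi.single_eq_same] at this
    simpa using this
  have hAv : (A *ᵥ v) i = A i j := by
    simp [hv, Matrix.mulVec, dotProduct, Pi.single_apply]
  have hAv0 : A *ᵥ v ≠ 0 := by
    intro h
    exact hij (by rw [← hAv, h]; rfl)
  have h1 := vnorm_mulVec_le_spec A v
  have h2 := vnorm_pos hAv0
  have h3 := vnorm_pos hv0
  nlinarith

lemma master {F : (Fin n → ℝ) → (Fin n → ℝ)} {J : (Fin n → ℝ) → Matrix (Fin n) (Fin n) ℝ}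
    (hn : 0 < n)
    (hF : ∀ z, HasFDerivAt F (LinearMap.toContinuousLinearMap ((J z).mulVecLin)) z)
    (hJc : Continuous J)
    {xs : Fin n → ℝ} (hxs : F xs = 0) (hJs : IsUnit (J xs).det)
    {μ L κ : ℝ} (hμ : μ = 1 / specNorm ((J xs)⁻¹)) (hL : L = specNorm (J xs)) (hκ : κ = L / μ)
    {M : ℝ} (hM : 0 ≤ M)
    (hLip : ∀ z, specNorm (J z - J xs) ≤ M * vnorm (z - xs))
    {x : ℕ → Fin n → ℝ} {H : ℕ → Matrix (Fin n) (Fin n) ℝ}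
    (hHk : ∀ k, IsUnit (H k).det) (hFk : ∀ k, F (x k) ≠ 0)
    (hyk : ∀ k, F (x (k + 1)) - F (x k) ≠ 0)
    (hx : ∀ k, x (k + 1) = x k - H k *ᵥ F (x k))
    (hH : ∀ k, H (k + 1) = H k +
        ((F (x (k + 1)) - F (x k)) ⬝ᵥ (F (x (k + 1)) - F (x k)))⁻¹ •
          vecMulVec (x (k + 1) - x k - H k *ᵥ (F (x (k + 1)) - F (x k)))
            (F (x (k + 1)) - F (x k)))
    {q : ℝ} (hq0 : 0 < q) (hq1 : q < 1)
    (τ r : ℕ → ℝ)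
    (hτ : ∀ k, τ k = frobNorm (J xs * (H k - (J xs)⁻¹)))
    (hr : ∀ k, r k = vnorm (x k - xs))
    (hτ0 : τ 0 ≤ q / κ)
    (hr0 : M * r 0 / μ ≤ q * (1 - q) / 7 * (q / κ - τ 0)) :
    (∀ k : ℕ, τ k ^ 2 ≤ τ 0 ^ 2
        + (1 + q) / (1 - q) * (2 * M * r 0 / (μ * κ) + 2 * M ^ 2 * r 0 ^ 2 / μ ^ 2)) ∧
    (τ 0 ^ 2 + (1 + q) / (1 - q) * (2 * M * r 0 / (μ * κ) + 2 * M ^ 2 * r 0 ^ 2 / μ ^ 2)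
        ≤ (q / κ) ^ 2) ∧
    (∀ k : ℕ, r (k + 1) ≤ q * r k) := by
  -- basic positivity facts
  have hAiA : (J xs)⁻¹ * (J xs) = 1 := nonsing_inv_mul _ hJs
  have hone : (1 : Matrix (Fin n) (Fin n) ℝ) ≠ 0 := by
    intro h
    have := congrFun (congrFun h ⟨0, hn⟩) ⟨0, hn⟩
    rw [Matrix.one_apply_eq] at this
    simpa using this
  have hAi_ne : (J xs)⁻¹ ≠ 0 := by
    intro h; rw [h, Matrix.zero_mul] at hAiA; exact hone hAiA.symm
  have hA_ne : J xs ≠ 0 := by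
    intro h; rw [h, Matrix.mul_zero] at hAiA; exact hone hAiA.symm
  have hspecAi_pos : 0 < specNorm ((J xs)⁻¹) := specNorm_pos hAi_ne
  have hL_pos : 0 < L := by rw [hL]; exact specNorm_pos hA_ne
  have hμ0 : 0 < μ := by rw [hμ]; exact one_div_pos.2 hspecAi_pos
  have hμA : specNorm ((J xs)⁻¹) = 1/μ := by rw [hμ, one_div_one_div]
  have hκ0 : 0 < κ := by rw [hκ]; exact div_pos hL_pos hμ0
  -- κ ≥ 1
  have hκ1 : 1 ≤ κ := by
    set v0 : Fin n → ℝ := Pi.single ⟨0, hn⟩ 1 with hv0def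
    have hv0 : v0 ≠ 0 := by
      intro h
      have := congrFun h ⟨0, hn⟩
      rw [hv0def, Pi.single_eq_same] at this
      simpa using this
    have hv0p : 0 < vnorm v0 := vnorm_pos hv0
    have h1 : v0 = (J xs)⁻¹ *ᵥ ((J xs) *ᵥ v0) := by
      rw [Matrix.mulVec_mulVec, hAiA, Matrix.one_mulVec]
    have h2 : vnorm v0 ≤ (1/μ) * (L * vnorm v0) := by
      calc vnorm v0 = vnorm ((J xs)⁻¹ *ᵥ ((J xs) *ᵥ v0)) := by rw [← h1]
        _ ≤ specNorm ((J xs)⁻¹) * vnorm ((J xs) *ᵥ v0) := vnorm_mulVec_le_spec _ _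
        _ ≤ (1/μ) * (L * vnorm v0) := by
            rw [hμA]
            refine mul_le_mul_of_nonneg_left ?_ (by positivity)
            rw [hL]; exact vnorm_mulVec_le_spec _ _
    have h3 : μ * vnorm v0 ≤ μ * ((1/μ) * (L * vnorm v0)) :=
      mul_le_mul_of_nonneg_left h2 hμ0.le
    have h4 : μ * ((1/μ) * (L * vnorm v0)) = L * vnorm v0 := by field_simp
    rw [hκ, le_div_iff₀ hμ0]
    nlinarith only [h3, h4, hv0p]
  -- scalar abbreviations
  have hτ0_nonneg : 0 ≤ τ 0 := by rw [hτ 0]; exact frobNorm_nonneg _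
  have hr_nonneg : ∀ k, 0 ≤ r k := fun k => by rw [hr k]; exact vnorm_nonneg _
  obtain ⟨c, hcdef⟩ : ∃ c : ℝ, c = M * r 0 / μ := ⟨_, rfl⟩
  obtain ⟨g, hgdef⟩ : ∃ g : ℝ, g = q / κ - τ 0 := ⟨_, rfl⟩
  have hg : 0 ≤ g := by rw [hgdef]; linarith
  have hc0 : 0 ≤ c := by
    rw [hcdef]; exact div_nonneg (mul_nonneg hM (hr_nonneg 0)) hμ0.le
  have hc_le : c ≤ q * (1 - q) / 7 * g := by rw [hcdef, hgdef]; exact hr0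
  have hqκ_le : q / κ ≤ 1 := by
    rw [div_le_one hκ0]; linarith
  have hqκ0 : 0 ≤ q / κ := by positivity
  have hg1 : g ≤ 1 := by rw [hgdef]; linarith
  have hc17 : c ≤ 1/7 := by
    have h1 : q*(1-q)/7*g ≤ q*(1-q)/7*1 :=
      mul_le_mul_of_nonneg_left hg1
        (by nlinarith only [mul_nonneg hq0.le (sub_nonneg.2 hq1.le)])
    nlinarith only [hc_le, h1, sq_nonneg (q - 1/2), hq0, hq1]
  have hMr0c : M * r 0 = c * μ := by rw [hcdef]; field_simp
  have hLκ : L = κ * μ := by rw [hκ]; field_simp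
  -- step lemmas
  have hstep_r : ∀ k, τ k ≤ τ 0 + 7/6*c * (∑ j ∈ Finset.range k, q^j) →
      r k ≤ q^k * r 0 → r (k+1) ≤ q * r k := by
    intro k hτle hrk
    obtain ⟨hSle, hS0⟩ := geom_aux hq0.le hq1 k
    have hcS : c * (∑ j ∈ Finset.range k, q^j) ≤ q * g / 7 := by
      nlinarith only [mul_le_mul_of_nonneg_left hSle hc0, hc_le, sub_pos.mpr hq1]
    have hτle' : τ k ≤ τ 0 + q * g / 6 := by nlinarith only [hτle, hcS]
    have hgq : q/κ = g + τ 0 := by rw [hgdef]; ring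
    have hτk_qκ : τ k ≤ q / κ := by
      nlinarith only [hτle', hgq, mul_nonneg (sub_nonneg.2 hq1.le) hg,
        mul_nonneg hq0.le hg, hg]
    have hκτ0 : κ * τ 0 = q - κ * g := by
      rw [hgdef]; field_simp; ring
    have hτk_nonneg : 0 ≤ τ k := by rw [hτ k]; exact frobNorm_nonneg _
    have hscalar : κ * τ k + 2 * c ≤ q := by
      have h1 : κ * τ k ≤ κ * (τ 0 + q * g / 6) :=
        mul_le_mul_of_nonneg_left hτle' (by linarith)
      have h2 : κ * (τ 0 + q * g / 6) = (q - κ * g) + κ * q * g / 6 := by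
        rw [mul_add, hκτ0]; ring
      have h3 : (0:ℝ) ≤ (κ - 1) * g := mul_nonneg (by linarith) hg
      have h4 : (0:ℝ) ≤ (1 - q) * (κ * g) := by
        refine mul_nonneg (by linarith) (mul_nonneg (by linarith) hg)
      nlinarith only [h1, h2, h3, h4, hc_le, hg, hq0.le, hq1.le, hκ1,
        mul_nonneg (sub_nonneg.2 hq1.le) hg, mul_nonneg (mul_nonneg hq0.le hq0.le) hg,
        mul_nonneg hq0.le hg]
    have hrk_le_r0 : r k ≤ r 0 := by
      have hqk1 : q^k ≤ 1 := pow_le_one₀ hq0.le hq1.le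
      nlinarith only [hrk, hqk1, hr_nonneg 0, mul_nonneg (sub_nonneg.2 hqk1) (hr_nonneg 0)]
    have hcore := rstep_core hF hJc hxs hJs hμA hμ0 hL hM hLip (H k) (x k)
    have hrkk : r (k+1) ≤
        (1/μ) * (τ k * (L * r k)) + (1/μ) * ((1 + τ k) * (M * r k * r k)) := by
      rw [← hτ k, ← hr k] at hcore
      rw [hr (k+1), hx k]
      exact hcore
    have hτk1 : τ k ≤ 1 := le_trans hτk_qκ hqκ_le
    have hMrk : M * r k ≤ c * μ := by
      rw [← hMr0c]; exact mul_le_mul_of_nonneg_left hrk_le_r0 hM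
    have h1 : (1/μ) * (τ k * (L * r k)) = κ * τ k * r k := by
      rw [hLκ]; field_simp
    have h2 : (1/μ) * ((1 + τ k) * (M * r k * r k)) ≤ 2 * c * r k := by
      have hstep : (1 + τ k) * (M * r k * r k) ≤ 2 * ((c * μ) * r k) := by
        have hMrkrk : M * r k * r k ≤ (c * μ) * r k :=
          mul_le_mul_of_nonneg_right hMrk (hr_nonneg k)
        have hMrkrk0 : 0 ≤ M * r k * r k := by
          have := hr_nonneg k; positivity
        nlinarith only [hMrkrk, hMrkrk0, hτk1,
          mul_nonneg (show (0:ℝ) ≤ 1 - τ k by linarith only [hτk1]) hMrkrk0]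
      calc (1/μ) * ((1 + τ k) * (M * r k * r k)) ≤ (1/μ) * (2 * ((c * μ) * r k)) :=
            mul_le_mul_of_nonneg_left hstep (by positivity)
        _ = 2 * c * r k := by field_simp
    have hfinal : κ * τ k * r k + 2 * c * r k ≤ q * r k := by
      nlinarith only [mul_le_mul_of_nonneg_right hscalar (hr_nonneg k)]
    linarith
  have hstep_τ : ∀ k, r (k+1) ≤ q * r k → r k ≤ q^k * r 0 →
      τ (k+1) ≤ τ k + 7/6 * (M * r k / μ) := by
    intro k hqstep hrk
    have hrk_le_r0 : r k ≤ r 0 := by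
      have hqk1 : q^k ≤ 1 := pow_le_one₀ hq0.le hq1.le
      nlinarith only [hrk, hqk1, hr_nonneg 0, mul_nonneg (sub_nonneg.2 hqk1) (hr_nonneg 0)]
    have hu0 : x (k+1) - x k ≠ 0 := by
      rw [hx k]
      intro h
      have h2 : H k *ᵥ F (x k) = 0 := by
        have : x k - H k *ᵥ F (x k) - x k = -(H k *ᵥ F (x k)) := by abel
        rw [this] at h
        simpa using h
      have h3 : F (x k) = 0 := by
        have := congrArg (fun v => (H k)⁻¹ *ᵥ v) h2
        simpa [Matrix.mulVec_mulVec, nonsing_inv_mul _ (hHk k), Matrix.one_mulVec] using this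
      exact hFk k h3
    have hclose : vnorm (x (k+1) - xs) ≤ vnorm (x k - xs) := by
      rw [← hr (k+1), ← hr k]
      nlinarith only [hqstep, hr_nonneg k, mul_nonneg (sub_nonneg.2 hq1.le) (hr_nonneg k)]
    have hsmall : M * vnorm (x k - xs) ≤ μ / 7 := by
      rw [← hr k]
      have h5 : M * r k ≤ c * μ := by
        rw [← hMr0c]; exact mul_le_mul_of_nonneg_left hrk_le_r0 hM
      nlinarith only [h5, mul_le_mul_of_nonneg_right hc17 hμ0.le]
    have hcore := tstep_core hF hJc hJs hμA hμ0 hM hLip (H k) (H (k+1)) (x k) (x (k+1))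
      (hH k) (hyk k) hu0 hclose hsmall
    rw [← hτ (k+1), ← hτ k, ← hr k] at hcore
    exact hcore
  -- the induction
  have key : ∀ k : ℕ, (r k ≤ q^k * r 0)
      ∧ (τ k ≤ τ 0 + 7/6*c * (∑ j ∈ Finset.range k, q^j))
      ∧ (τ k ^ 2 ≤ τ 0 ^ 2 + 2*(q/κ)*(7/6*c) * (∑ j ∈ Finset.range k, q^j)
          + (7/6*c)^2 * (∑ j ∈ Finset.range k, (q^2)^j))
      ∧ (r (k+1) ≤ q * r k) := by
    intro k
    induction k with
    | zero =>
      refine ⟨by simp, by simp, by simp, hstep_r 0 (by simp) (by simp)⟩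
    | succ k ih =>
      obtain ⟨ih1, ih2, ih3, ih4⟩ := ih
      have new1 : r (k+1) ≤ q^(k+1) * r 0 := by
        calc r (k+1) ≤ q * r k := ih4
          _ ≤ q * (q^k * r 0) := mul_le_mul_of_nonneg_left ih1 hq0.le
          _ = q^(k+1) * r 0 := by ring
      have hδ : M * r k / μ ≤ c * q^k := by
        have h1 : M * r k ≤ M * (q^k * r 0) := mul_le_mul_of_nonneg_left ih1 hM
        have h2 : M * (q^k * r 0) / μ = c * q^k := by rw [hcdef]; field_simp
        rw [div_le_iff₀ hμ0]
        calc M * r k ≤ M * (q^k * r 0) := h1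
          _ = q^k * (M * r 0) := by ring
          _ = q^k * (c * μ) := by rw [hMr0c]
          _ = c * q^k * μ := by ring
      have hτs := hstep_τ k ih4 ih1
      have new2 : τ (k+1) ≤ τ 0 + 7/6*c * (∑ j ∈ Finset.range (k+1), q^j) := by
        rw [Finset.sum_range_succ]
        have h6 : 7/6 * (M * r k / μ) ≤ 7/6 * (c * q^k) := by linarith only [hδ]
        linarith only [hτs, h6, ih2]
      -- τ k ≤ q/κ
      obtain ⟨hSle, hS0⟩ := geom_aux hq0.le hq1 k
      have hcS : c * (∑ j ∈ Finset.range k, q^j) ≤ q * g / 7 := by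
        nlinarith only [mul_le_mul_of_nonneg_left hSle hc0, hc_le, sub_pos.mpr hq1]
      have hτle' : τ k ≤ τ 0 + q * g / 6 := by nlinarith only [ih2, hcS]
      have hgq : q/κ = g + τ 0 := by rw [hgdef]; ring
      have hτk_qκ : τ k ≤ q / κ := by
        nlinarith only [hτle', hgq, mul_nonneg (sub_nonneg.2 hq1.le) hg,
          mul_nonneg hq0.le hg, hg]
      have hτk_nonneg : 0 ≤ τ k := by rw [hτ k]; exact frobNorm_nonneg _
      have hτk1_nonneg : 0 ≤ τ (k+1) := by rw [hτ (k+1)]; exact frobNorm_nonneg _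
      have hδ0 : 0 ≤ M * r k / μ := by
        have := hr_nonneg k; positivity
      have new3 : τ (k+1) ^ 2 ≤ τ 0 ^ 2 + 2*(q/κ)*(7/6*c) * (∑ j ∈ Finset.range (k+1), q^j)
          + (7/6*c)^2 * (∑ j ∈ Finset.range (k+1), (q^2)^j) := by
        rw [Finset.sum_range_succ, Finset.sum_range_succ]
        have hsq : τ (k+1) ^ 2 ≤ (τ k + 7/6 * (M * r k / μ))^2 := by
          have h0 : 0 ≤ τ k + 7/6 * (M * r k / μ) := by linarith
          exact pow_le_pow_left₀ hτk1_nonneg hτs 2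
        have hδle : 7/6 * (M * r k / μ) ≤ 7/6*c * q^k := by linarith
        have hδsq : (7/6 * (M * r k / μ))^2 ≤ (7/6*c)^2 * (q^2)^k := by
          have h1 : (7/6 * (M * r k / μ))^2 ≤ (7/6*c * q^k)^2 := by
            refine pow_le_pow_left₀ (by linarith) hδle 2
          have h2 : (7/6*c * q^k)^2 = (7/6*c)^2 * (q^2)^k := by
            rw [mul_pow, ← pow_mul, ← pow_mul, Nat.mul_comm]
          linarith [h1, h2.le]
        have hcross : τ k * (7/6 * (M * r k / μ)) ≤ (q/κ) * (7/6*c * q^k) := by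
          refine mul_le_mul hτk_qκ hδle (by linarith) hqκ0
        linarith only [hsq, hcross, hδsq, ih3]
      exact ⟨new1, new2, new3, hstep_r (k+1) new2 new1⟩
  -- conclusions
  have hμne : μ ≠ 0 := hμ0.ne'
  have hκne : κ ≠ 0 := hκ0.ne'
  have hqne : q ≠ 0 := hq0.ne'
  have e2c : 2 * M * r 0 / (μ * κ) = 2 * (c/κ) := by
    rw [hcdef]; field_simp
  have e2c2 : 2 * M ^ 2 * r 0 ^ 2 / μ ^ 2 = 2 * c^2 := by
    rw [hcdef]; field_simp
  obtain ⟨B, hB⟩ : ∃ B : ℝ, B = q / κ := ⟨_, rfl⟩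
  obtain ⟨D, hD⟩ : ∃ D : ℝ, D = c / q := ⟨_, rfl⟩
  obtain ⟨w, hwdef⟩ : ∃ w : ℝ, w = 1 / (1 - q) := ⟨_, rfl⟩
  have h1q : (0:ℝ) < 1 - q := by linarith
  have hB0 : 0 ≤ B := by rw [hB]; exact hqκ0
  have hDq : c = D * q := by rw [hD]; field_simp
  have hD0 : 0 ≤ D := by rw [hD]; exact div_nonneg hc0 hq0.le
  have hw1 : w * (1 - q) = 1 := by rw [hwdef]; field_simp
  have hw0 : 0 ≤ w := by rw [hwdef]; positivity
  have hτ0B : τ 0 = B - g := by rw [hB, hgdef]; ring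
  have hgB : g ≤ B := by linarith
  have hcκB : c / κ = D * B := by rw [hDq, hB]; rw [mul_div_assoc]
  have hD_le : D ≤ (1-q) * g / 7 := by
    have h := hc_le
    rw [hDq] at h
    nlinarith only [h, hq0]
  have hD_le2 : D ≤ g / 7 := by nlinarith only [hD_le, hg, hq0.le, mul_nonneg hq0.le hg]
  have hwD : w * D ≤ g / 7 := by
    have h1 := mul_le_mul_of_nonneg_left hD_le hw0
    have h2 : w * ((1-q) * g / 7) = g / 7 := by
      rw [hwdef]; field_simp
    linarith
  have hwDD : w * D * D ≤ g/7 * (g/7) :=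
    mul_le_mul hwD hD_le2 hD0 (by positivity)
  have hgeq : (1+q)/(1-q) = (1+q) * w := by
    rw [hwdef]; ring
  -- part 2 arithmetic
  have part2core : τ 0 ^2 + (1+q) * w * (2*(D*B) + 2*(D*q)^2) ≤ B^2 := by
    have h_t1 : (1+q) * w * (2*(D*B)) ≤ 4/7 * (g*B) := by
      have hBwD : B * (w*D) ≤ B * (g/7) := mul_le_mul_of_nonneg_left hwD hB0
      nlinarith only [hBwD, hB0, hq1.le, hq0.le, hg,
        mul_nonneg hB0 (mul_nonneg hw0 hD0),
        mul_nonneg (sub_nonneg.2 hq1.le) (mul_nonneg hB0 (mul_nonneg hw0 hD0))]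
    have h_t2 : (1+q) * w * (2*(D*q)^2) ≤ 4/49 * g^2 := by
      have hq21 : q^2 ≤ 1 := by nlinarith only [hq0.le, hq1.le]
      have hwDD0 : 0 ≤ w * D * D := mul_nonneg (mul_nonneg hw0 hD0) hD0
      nlinarith only [hwDD, hwDD0, hq21, hq0.le, hq1.le,
        mul_nonneg (sub_nonneg.2 hq21) hwDD0,
        mul_nonneg (mul_nonneg hq0.le hq0.le) hwDD0,
        mul_nonneg (sub_nonneg.2 hq1.le) hwDD0]
    have hg2 : g * g ≤ g * B := mul_le_mul_of_nonneg_left hgB hg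
    nlinarith only [h_t1, h_t2, hτ0B, hg2, hg, hB0]
  have hrw1 : τ 0 ^ 2 + (1 + q) / (1 - q) * (2 * (c/κ) + 2 * c ^ 2)
      = τ 0 ^2 + (1+q) * w * (2*(D*B) + 2*(D*q)^2) := by
    rw [hcκB, hgeq, hDq]
  -- part 1 arithmetic
  have part1 : ∀ k : ℕ, τ k ^ 2 ≤ τ 0 ^ 2
      + (1 + q) / (1 - q) * (2 * M * r 0 / (μ * κ) + 2 * M ^ 2 * r 0 ^ 2 / μ ^ 2) := by
    intro k
    rw [e2c, e2c2]
    obtain ⟨-, -, ih3, -⟩ := key k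
    obtain ⟨hSle, hS0⟩ := geom_aux hq0.le hq1 k
    have hq20 : (0:ℝ) ≤ q^2 := sq_nonneg q
    have hq21 : q^2 < 1 := by nlinarith only [hq0, hq1]
    obtain ⟨hTle, hT0⟩ := geom_aux hq20 hq21 k
    have hSw : (∑ j ∈ Finset.range k, q^j) ≤ 1/(1-q) := by
      rw [le_div_iff₀ h1q]; exact hSle
    have hTw : (∑ j ∈ Finset.range k, (q^2)^j) ≤ 1/(1-q^2) := by
      rw [le_div_iff₀ (by nlinarith only [hq21] : (0:ℝ) < 1 - q^2)]; exact hTle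
    have piece1 : 2*(q/κ)*(7/6*c) * (∑ j ∈ Finset.range k, q^j)
        ≤ (1+q)/(1-q) * (2*(c/κ)) := by
      have hqS : (7/3)*q*(∑ j ∈ Finset.range k, q^j) ≤ 2*(1+q)/(1-q) := by
        calc (7/3)*q*(∑ j ∈ Finset.range k, q^j) ≤ (7/3)*q*(1/(1-q)) := by
              exact mul_le_mul_of_nonneg_left hSw (by positivity)
          _ = (7/3*q)/(1-q) := by ring
          _ ≤ 2*(1+q)/(1-q) := by
              rw [div_le_div_iff₀ h1q h1q]
              nlinarith only [hq0.le, hq1.le, h1q, mul_nonneg hq0.le (sub_nonneg.2 hq1.le)]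
      have hcκ0 : (0:ℝ) ≤ c/κ := div_nonneg hc0 hκ0.le
      have h := mul_le_mul_of_nonneg_right hqS hcκ0
      calc 2*(q/κ)*(7/6*c) * (∑ j ∈ Finset.range k, q^j)
          = (7/3)*q*(∑ j ∈ Finset.range k, q^j) * (c/κ) := by
            ring
        _ ≤ 2*(1+q)/(1-q) * (c/κ) := h
        _ = (1+q)/(1-q) * (2*(c/κ)) := by ring
    have piece2 : (7/6*c)^2 * (∑ j ∈ Finset.range k, (q^2)^j)
        ≤ (1+q)/(1-q) * (2*c^2) := by
      have h1 : (7/6*c)^2 * (∑ j ∈ Finset.range k, (q^2)^j)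
          ≤ (7/6*c)^2 * (1/(1-q^2)) :=
        mul_le_mul_of_nonneg_left hTw (by positivity)
      have h2 : (49/36) * (1/(1-q^2)) ≤ 2*(1+q)/(1-q) := by
        have e : (49/36 : ℝ) * (1/(1-q^2)) = (49/36)/(1-q^2) := by ring
        rw [e, div_le_div_iff₀ (by nlinarith only [hq21] : (0:ℝ) < 1 - q^2) h1q]
        nlinarith only [hq0.le, hq1.le, sub_nonneg.2 hq1.le,
          mul_nonneg (sub_nonneg.2 hq1.le) hq0.le,
          mul_nonneg (mul_nonneg (sub_nonneg.2 hq1.le) hq0.le) hq0.le]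
      have h3 := mul_le_mul_of_nonneg_right h2 (sq_nonneg c)
      calc (7/6*c)^2 * (∑ j ∈ Finset.range k, (q^2)^j)
          ≤ (7/6*c)^2 * (1/(1-q^2)) := h1
        _ = (49/36) * (1/(1-q^2)) * c^2 := by ring
        _ ≤ 2*(1+q)/(1-q) * c^2 := h3
        _ = (1+q)/(1-q) * (2*c^2) := by ring
    calc τ k ^2 ≤ τ 0 ^ 2 + 2*(q/κ)*(7/6*c) * (∑ j ∈ Finset.range k, q^j)
          + (7/6*c)^2 * (∑ j ∈ Finset.range k, (q^2)^j) := ih3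
      _ ≤ τ 0 ^2 + (1+q)/(1-q) * (2*(c/κ)) + (1+q)/(1-q) * (2*c^2) := by
          linarith only [piece1, piece2]
      _ = τ 0 ^2 + (1+q)/(1-q) * (2*(c/κ) + 2*c^2) := by ring
  refine ⟨part1, ?_, fun k => (key k).2.2.2⟩
  rw [e2c, e2c2, hrw1, ← hB]
  exact part2core
end Chunk6

/-- Local linear convergence of Broyden's "bad" scheme (Lemma: base-bad). If for some
`q ∈ (0,1)` the initial quantities satisfy `τ₀ ≤ q/κ` and
`M r₀/μ ≤ (q(1−q)/7)(q/κ − τ₀)`, then for all `k`,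
`τ_k² ≤ τ₀² + ((1+q)/(1−q))(2M r₀/(μκ) + 2M² r₀²/μ²) ≤ (q/κ)²` and `r_{k+1} ≤ q r_k`. -/
theorem stmt14 {n : ℕ} (F : (Fin n → ℝ) → (Fin n → ℝ))
    (J : (Fin n → ℝ) → Matrix (Fin n) (Fin n) ℝ)
    (hF : ∀ z, HasFDerivAt F (LinearMap.toContinuousLinearMap ((J z).mulVecLin)) z)
    (hJc : Continuous J)
    (xs : Fin n → ℝ) (hxs : F xs = 0) (hJs : IsUnit (J xs).det)
    (μ L κ : ℝ) (hμ : μ = 1 / specNorm ((J xs)⁻¹)) (hL : L = specNorm (J xs)) (hκ : κ = L / μ)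
    (M : ℝ) (hM : 0 ≤ M)
    (hLip : ∀ z, specNorm (J z - J xs) ≤ M * vnorm (z - xs))
    (x : ℕ → Fin n → ℝ) (H : ℕ → Matrix (Fin n) (Fin n) ℝ)
    (hHk : ∀ k, IsUnit (H k).det) (hFk : ∀ k, F (x k) ≠ 0)
    (hyk : ∀ k, F (x (k + 1)) - F (x k) ≠ 0)
    (hx : ∀ k, x (k + 1) = x k - H k *ᵥ F (x k))
    (hH : ∀ k, H (k + 1) = H k +
        ((F (x (k + 1)) - F (x k)) ⬝ᵥ (F (x (k + 1)) - F (x k)))⁻¹ •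
          vecMulVec (x (k + 1) - x k - H k *ᵥ (F (x (k + 1)) - F (x k)))
            (F (x (k + 1)) - F (x k)))
    (q : ℝ) (hq0 : 0 < q) (hq1 : q < 1)
    (hτ0 : frobNorm (J xs * (H 0 - (J xs)⁻¹)) ≤ q / κ)
    (hr0 : M * vnorm (x 0 - xs) / μ ≤
      q * (1 - q) / 7 * (q / κ - frobNorm (J xs * (H 0 - (J xs)⁻¹)))) :
    (∀ k : ℕ, frobNorm (J xs * (H k - (J xs)⁻¹)) ^ 2 ≤
        frobNorm (J xs * (H 0 - (J xs)⁻¹)) ^ 2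
          + (1 + q) / (1 - q) *
              (2 * M * vnorm (x 0 - xs) / (μ * κ) + 2 * M ^ 2 * vnorm (x 0 - xs) ^ 2 / μ ^ 2)) ∧
      (frobNorm (J xs * (H 0 - (J xs)⁻¹)) ^ 2
          + (1 + q) / (1 - q) *
              (2 * M * vnorm (x 0 - xs) / (μ * κ) + 2 * M ^ 2 * vnorm (x 0 - xs) ^ 2 / μ ^ 2)
        ≤ (q / κ) ^ 2) ∧
      (∀ k : ℕ, vnorm (x (k + 1) - xs) ≤ q * vnorm (x k - xs)) := by
  rcases Nat.eq_zero_or_pos n with hn0 | hn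
  · exfalso
    apply hFk 0
    subst hn0
    exact funext fun i => i.elim0
  exact master hn hF hJc hxs hJs hμ hL hκ hM hLip hHk hFk hyk hx hH hq0 hq1
    (fun k => frobNorm (J xs * (H k - (J xs)⁻¹))) (fun k => vnorm (x k - xs))
    (fun _ => rfl) (fun _ => rfl) hτ0 hr0
end

section
/- Suppose 28 M r₀/μ + τ₀ ≤ 1/(2κ). Define q_m := min{ q : τ₀ ≤ q/κ and M r₀/μ ≤ (q(1−q)/7)·(q/κ − τ₀) }. Then the feasible set contains q = 1/2 (so q_m is well defined), and (1/2)·(κτ₀ + √(κ M r₀/μ)) ≤ q_m ≤ 4·(κτ₀ + √(κ M r₀/μ)). -/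
open Matrix MeasureTheory

lemma specNorm_pos_of_ne_zero {n : ℕ} [Nonempty (Fin n)] (A : Matrix (Fin n) (Fin n) ℝ)
    (hA : A ≠ 0) : 0 < specNorm A := by
  rw [specNorm, norm_pos_iff]
  intro h
  apply hA
  have hinj : Function.Injective (Matrix.toEuclideanCLM (𝕜 := ℝ) (n := Fin n)) :=
    EquivLike.injective _
  apply hinj
  rw [h, map_zero]

lemma specNorm_zero_dim (A : Matrix (Fin 0) (Fin 0) ℝ) : specNorm A = 0 := by
  rw [specNorm]
  have : Matrix.toEuclideanCLM (𝕜 := ℝ) A = 0 := by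
    apply ContinuousLinearMap.ext
    intro x
    exact Subsingleton.elim _ _
  rw [this, norm_zero]

lemma aux16 (κ τ0 c : ℝ) (hκ : 0 < κ) (hτ : 0 ≤ τ0) (hc : 0 ≤ c)
    (hinit : 28 * c + τ0 ≤ 1 / (2 * κ)) :
    (1 / 2 : ℝ) ∈ {q : ℝ | τ0 ≤ q / κ ∧ c ≤ q * (1 - q) / 7 * (q / κ - τ0)} ∧
      1 / 2 * (κ * τ0 + Real.sqrt (κ * c)) ≤
        sInf {q : ℝ | τ0 ≤ q / κ ∧ c ≤ q * (1 - q) / 7 * (q / κ - τ0)} ∧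
      sInf {q : ℝ | τ0 ≤ q / κ ∧ c ≤ q * (1 - q) / 7 * (q / κ - τ0)} ≤
        4 * (κ * τ0 + Real.sqrt (κ * c)) := by
  set S := {q : ℝ | τ0 ≤ q / κ ∧ c ≤ q * (1 - q) / 7 * (q / κ - τ0)} with hS
  set a := κ * τ0 with ha'
  set b := κ * c with hb'
  have ha : 0 ≤ a := mul_nonneg hκ.le hτ
  have hb : 0 ≤ b := mul_nonneg hκ.le hc
  have hab : a + 28 * b ≤ 1 / 2 := by
    have h1 := mul_le_mul_of_nonneg_left hinit hκ.le
    have h2 : κ * (1 / (2 * κ)) = 1 / 2 := by field_simp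
    nlinarith
  have hmem : ∀ q : ℝ, q ∈ S ↔ a ≤ q ∧ b ≤ q * (1 - q) / 7 * (q - a) := by
    intro q
    constructor
    · rintro ⟨h1, h2⟩
      refine ⟨?_, ?_⟩
      · rw [le_div_iff₀ hκ] at h1; nlinarith
      · have := mul_le_mul_of_nonneg_left h2 hκ.le
        calc b = κ * c := rfl
          _ ≤ κ * (q * (1 - q) / 7 * (q / κ - τ0)) := this
          _ = q * (1 - q) / 7 * (q - a) := by field_simp; ring
    · rintro ⟨h1, h2⟩
      refine ⟨?_, ?_⟩
      · rw [le_div_iff₀ hκ]; nlinarith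
      · have key : κ * (q * (1 - q) / 7 * (q / κ - τ0)) = q * (1 - q) / 7 * (q - a) := by
          field_simp; ring
        have : κ * c ≤ κ * (q * (1 - q) / 7 * (q / κ - τ0)) := by rw [key]; exact h2
        exact le_of_mul_le_mul_left this hκ
  have hhalf : (1 / 2 : ℝ) ∈ S := by
    rw [hmem]
    constructor
    · linarith
    · nlinarith
  have hlb : ∀ q ∈ S, (a + Real.sqrt b) / 2 ≤ q := by
    intro q hq
    rw [hmem] at hq
    obtain ⟨h1, h2⟩ := hq
    have hq0 : 0 ≤ q := le_trans ha h1
    have hbq : b ≤ q ^ 2 := by nlinarith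
    have hsq : Real.sqrt b ≤ q := by
      calc Real.sqrt b ≤ Real.sqrt (q ^ 2) := Real.sqrt_le_sqrt hbq
        _ = q := by rw [Real.sqrt_sq hq0]
    linarith
  have hbdd : BddBelow S := ⟨(a + Real.sqrt b) / 2, fun q hq => hlb q hq⟩
  have hne : S.Nonempty := ⟨1 / 2, hhalf⟩
  refine ⟨hhalf, ?_, ?_⟩
  · have := le_csInf hne (fun q hq => hlb q hq)
    linarith [this]
  · by_cases hcase : (1 / 2 : ℝ) ≤ 4 * (a + Real.sqrt b)
    · calc sInf S ≤ 1 / 2 := csInf_le hbdd hhalf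
        _ ≤ 4 * (a + Real.sqrt b) := hcase
    · push_neg at hcase
      set s := Real.sqrt b with hs'
      have hs0 : 0 ≤ s := Real.sqrt_nonneg b
      have hs2 : s ^ 2 = b := Real.sq_sqrt hb
      have hq0half : 4 * (a + s) < 1 / 2 := hcase
      have hq0mem : 4 * (a + s) ∈ S := by
        rw [hmem]
        refine ⟨by nlinarith, ?_⟩
        have hP : (0:ℝ) ≤ (4 * a + 4 * s) * (3 * a + 4 * s) :=
          mul_nonneg (by linarith) (by linarith)
        have h1 : 16 * s ^ 2 ≤ (4 * a + 4 * s) * (3 * a + 4 * s) := by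
          nlinarith [mul_nonneg ha hs0, sq_nonneg a]
        have h2 : (1:ℝ) / 2 ≤ 1 - 4 * (a + s) := by linarith
        have h3 : 1 / 2 * ((4 * a + 4 * s) * (3 * a + 4 * s)) ≤
            (1 - 4 * (a + s)) * ((4 * a + 4 * s) * (3 * a + 4 * s)) :=
          mul_le_mul_of_nonneg_right h2 hP
        nlinarith [h1, h3, hs2]
      exact csInf_le hbdd hq0mem

/-- If `28 M r₀/μ + τ₀ ≤ 1/(2κ)`, the feasible set
`{q : τ₀ ≤ q/κ ∧ M r₀/μ ≤ (q(1−q)/7)(q/κ − τ₀)}` contains `q = 1/2`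
(so `q_m := inf` of this set is well defined), and
`(1/2)(κτ₀ + √(κ M r₀/μ)) ≤ q_m ≤ 4(κτ₀ + √(κ M r₀/μ))`. -/
theorem stmt16 {n : ℕ} (F : (Fin n → ℝ) → (Fin n → ℝ))
    (J : (Fin n → ℝ) → Matrix (Fin n) (Fin n) ℝ)
    (hF : ∀ z, HasFDerivAt F (LinearMap.toContinuousLinearMap ((J z).mulVecLin)) z)
    (hJc : Continuous J)
    (xs : Fin n → ℝ) (hxs : F xs = 0) (hJs : IsUnit (J xs).det)
    (μ L κ : ℝ) (hμ : μ = 1 / specNorm ((J xs)⁻¹)) (hL : L = specNorm (J xs)) (hκ : κ = L / μ)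
    (M : ℝ) (hM : 0 ≤ M)
    (hLip : ∀ z, specNorm (J z - J xs) ≤ M * vnorm (z - xs))
    (x0 : Fin n → ℝ) (H0 : Matrix (Fin n) (Fin n) ℝ)
    (r0 τ0 : ℝ) (hr0 : r0 = vnorm (x0 - xs)) (hτ0 : τ0 = frobNorm (J xs * (H0 - (J xs)⁻¹)))
    (hinit : 28 * M * r0 / μ + τ0 ≤ 1 / (2 * κ)) :
    (1 / 2 : ℝ) ∈ {q : ℝ | τ0 ≤ q / κ ∧
        M * r0 / μ ≤ q * (1 - q) / 7 * (q / κ - τ0)} ∧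
      1 / 2 * (κ * τ0 + Real.sqrt (κ * M * r0 / μ)) ≤
        sInf {q : ℝ | τ0 ≤ q / κ ∧
          M * r0 / μ ≤ q * (1 - q) / 7 * (q / κ - τ0)} ∧
      sInf {q : ℝ | τ0 ≤ q / κ ∧
          M * r0 / μ ≤ q * (1 - q) / 7 * (q / κ - τ0)} ≤
        4 * (κ * τ0 + Real.sqrt (κ * M * r0 / μ)) := by
  rcases Nat.eq_zero_or_pos n with hn | hn
  · subst hn
    have hτ : τ0 = 0 := by simp [hτ0, frobNorm]
    have hr : r0 = 0 := by simp [hr0, vnorm]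
    have hμ0 : μ = 0 := by rw [hμ, specNorm_zero_dim]; simp
    have hκ0 : κ = 0 := by rw [hκ, hμ0, div_zero]
    have hSet : {q : ℝ | τ0 ≤ q / κ ∧
        M * r0 / μ ≤ q * (1 - q) / 7 * (q / κ - τ0)} = Set.univ := by
      ext q
      simp [hτ, hr, hκ0]
    rw [hSet]
    have hinf : sInf (Set.univ : Set ℝ) = 0 :=
      Real.sInf_of_not_bddBelow (by simpa using not_bddBelow_univ)
    refine ⟨trivial, ?_, ?_⟩ <;> rw [hinf] <;> simp [hτ, hr, hκ0]
  · haveI : Nonempty (Fin n) := ⟨⟨0, hn⟩⟩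
    have hJne : J xs ≠ 0 := by
      intro h
      rw [h, Matrix.det_zero] at hJs
      exact not_isUnit_zero hJs
    have hJine : (J xs)⁻¹ ≠ 0 := by
      intro h
      have h1 : (J xs)⁻¹ * (J xs) = 1 := Matrix.nonsing_inv_mul (J xs) hJs
      rw [h, zero_mul] at h1
      exact one_ne_zero h1.symm
    have hμpos : 0 < μ := by
      rw [hμ]
      exact div_pos one_pos (specNorm_pos_of_ne_zero _ hJine)
    have hLpos : 0 < L := hL ▸ specNorm_pos_of_ne_zero _ hJne
    have hκpos : 0 < κ := hκ ▸ div_pos hLpos hμpos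
    have hτnn : 0 ≤ τ0 := hτ0 ▸ Real.sqrt_nonneg _
    have hrnn : 0 ≤ r0 := hr0 ▸ Real.sqrt_nonneg _
    have hcnn : 0 ≤ M * r0 / μ := div_nonneg (mul_nonneg hM hrnn) hμpos.le
    have hinit' : 28 * (M * r0 / μ) + τ0 ≤ 1 / (2 * κ) := by
      have e : 28 * (M * r0 / μ) = 28 * M * r0 / μ := by ring
      rw [e]; exact hinit
    have H := aux16 κ τ0 (M * r0 / μ) hκpos hτnn hcnn hinit'
    have e2 : κ * M * r0 / μ = κ * (M * r0 / μ) := by ring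
    rw [e2]
    exact H
end
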